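/- In the Baumslag–Solitar group BS(1,m) = ⟨a,b | a b a⁻¹ = b^m⟩ with m ≥ 2, the cyclic subgroup ⟨a⟩ generated by the stable letter is malnormal relative to itself: for every g ∈ BS(1,m) with g ∉ ⟨a⟩, the intersection g⟨a⟩g⁻¹ ∩ ⟨a⟩ is trivial. -/

import Mathlib

def BSrel (m : ℕ) : Set (FreeGroup Bool) :=
  {FreeGroup.of true * FreeGroup.of false * (FreeGroup.of true)⁻¹ * (FreeGroup.of false ^ m)⁻¹}

def BS (m : ℕ) : Type := PresentedGroup (BSrel m)

instance (m : ℕ) : Group (BS m) := by unfold BS; infer_instance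

def BSa (m : ℕ) : BS m := PresentedGroup.of true
def BSb (m : ℕ) : BS m := PresentedGroup.of false

/-! ### The defining relation -/

theorem BS_rel (m : ℕ) : BSa m * BSb m * (BSa m)⁻¹ = (BSb m) ^ m := by
  have h : (PresentedGroup.mk (BSrel m))
      (FreeGroup.of true * FreeGroup.of false * (FreeGroup.of true)⁻¹ * (FreeGroup.of false ^ m)⁻¹) = 1 := by
    apply (QuotientGroup.eq_one_iff _).2
    apply Subgroup.subset_normalClosure
    exact rfl
  simp only [map_mul, map_inv, map_pow] at h
  exact mul_inv_eq_one.mp h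

lemma BS_conj_zpow (m : ℕ) (j : ℤ) :
    BSa m * (BSb m)^j * (BSa m)⁻¹ = (BSb m)^(j * m) := by
  have : BSa m * (BSb m)^j * (BSa m)⁻¹ = (BSa m * BSb m * (BSa m)⁻¹)^j := by
    rw [conj_zpow]
  rw [this, BS_rel, ← zpow_natCast (BSb m) m, ← zpow_mul, mul_comm]

lemma BS_conj_pow (m : ℕ) (e : ℕ) (j : ℤ) :
    (BSa m)^e * (BSb m)^j * ((BSa m)^e)⁻¹ = (BSb m)^(j * m^e) := by
  induction e generalizing j with
  | zero => simp
  | succ k ih =>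
    have : (BSa m)^(k+1) * (BSb m)^j * ((BSa m)^(k+1))⁻¹
        = (BSa m)^k * (BSa m * (BSb m)^j * (BSa m)⁻¹) * ((BSa m)^k)⁻¹ := by
      rw [pow_succ]; group
    rw [this, BS_conj_zpow, ih, pow_succ]
    ring_nf

/-! ### Permutation representation on ℚ : a ↦ (x ↦ m·x), b ↦ (x ↦ x+1) -/

lemma addRight_zpow (t : ℤ) (x : ℚ) : ((Equiv.addRight (1:ℚ))^t) x = x + t := by
  induction t using Int.induction_on with
  | zero => simp
  | succ n ih => rw [zpow_add_one]; push_cast; simp_all; ring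
  | pred n ih => rw [zpow_sub_one]; push_cast; simp_all [Equiv.Perm.mul_apply]; ring

noncomputable def BSf (m : ℕ) (hm : (m:ℚ) ≠ 0) : Bool → Equiv.Perm ℚ :=
  fun x => match x with | true => Equiv.mulLeft₀ (m:ℚ) hm | false => Equiv.addRight 1

lemma BSrel_holds (m : ℕ) (hm : (m:ℚ) ≠ 0) :
    ∀ r ∈ BSrel m, FreeGroup.lift (BSf m hm) r = 1 := by
  intro r hr
  rw [BSrel, Set.mem_singleton_iff] at hr
  subst hr
  simp only [map_mul, map_inv, map_pow, FreeGroup.lift_apply_of, BSf]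
  rw [mul_inv_eq_one]
  ext x
  have h1 : ∀ (n : ℕ) (y : ℚ), ((Equiv.addRight (1:ℚ))^n) y = y + n := by
    intro n; induction n with
    | zero => simp
    | succ k ih => intro y; rw [pow_succ]; push_cast; simp_all [Equiv.Perm.mul_apply]; ring
  simp only [Equiv.Perm.mul_apply, h1]
  simp only [Equiv.Perm.inv_def, Equiv.mulLeft₀_apply, Equiv.mulLeft₀_symm_apply, Equiv.Perm.one_apply]
  field_simp
  rw [Equiv.coe_addRight, mul_add, mul_one]
  field_simp

noncomputable def BStheta (m : ℕ) (hm : (m:ℚ) ≠ 0) : BS m →* Equiv.Perm ℚ :=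
  PresentedGroup.toGroup (BSrel_holds m hm)

lemma BSb_inf_order (m : ℕ) (hm : (m:ℚ) ≠ 0) (t : ℤ) (h : (BSb m)^t = 1) : t = 0 := by
  have h0 := congrArg (BStheta m hm) h
  rw [map_zpow, map_one] at h0
  have hb : BStheta m hm (BSb m) = Equiv.addRight 1 := PresentedGroup.toGroup.of _
  rw [hb] at h0
  have h1 := congrArg (fun f : Equiv.Perm ℚ => f 0) h0
  simp only [Equiv.Perm.one_apply] at h1
  rw [addRight_zpow] at h1
  have h2 : (t:ℚ) = 0 := by linarith
  exact_mod_cast h2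

/-! ### Abelianization map to ℤ -/

noncomputable def BSnu (m : ℕ) : BS m →* Multiplicative ℤ :=
  PresentedGroup.toGroup (f := fun x => Multiplicative.ofAdd (if x then 1 else 0))
    (by
      intro r hr
      rw [BSrel, Set.mem_singleton_iff] at hr
      subst hr
      simp only [map_mul, map_inv, map_pow, FreeGroup.lift_apply_of, if_true, if_false]
      rw [mul_inv_eq_one]
      rw [mul_comm, ← mul_assoc]
      simp [← ofAdd_nsmul])

lemma BSnu_a (m : ℕ) : BSnu m (BSa m) = Multiplicative.ofAdd 1 :=
  PresentedGroup.toGroup.of _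

/-! ### Normal form: every element is a^(-p) b^j a^q -/

def BSnf (m : ℕ) : Subgroup (BS m) where
  carrier := {g | ∃ p q : ℕ, ∃ j : ℤ,
    g = (BSa m)^(-(p:ℤ)) * (BSb m)^j * (BSa m)^((q:ℤ))}
  one_mem' := ⟨0, 0, 0, by simp⟩
  inv_mem' := by
    rintro g ⟨p, q, j, rfl⟩
    exact ⟨q, p, -j, by simp [mul_inv_rev]; group⟩
  mul_mem' := by
    rintro g₁ g₂ ⟨p₁, q₁, j₁, rfl⟩ ⟨p₂, q₂, j₂, rfl⟩
    rcases le_or_gt p₂ q₁ with h | h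
    · refine ⟨p₁, (q₁ - p₂) + q₂, j₁ + j₂ * m^(q₁ - p₂), ?_⟩
      have key := BS_conj_pow m (q₁ - p₂) j₂
      have hc : ((q₁ - p₂ : ℕ) : ℤ) = (q₁ : ℤ) - p₂ := by omega
      rw [zpow_add, ← key]
      rw [← zpow_natCast (BSa m) (q₁ - p₂), hc]
      push_cast
      group
      simp only [hc]
      ring_nf
    · refine ⟨p₁ + (p₂ - q₁), q₂, j₁ * m^(p₂ - q₁) + j₂, ?_⟩
      have key := BS_conj_pow m (p₂ - q₁) j₁
      have hc : ((p₂ - q₁ : ℕ) : ℤ) = (p₂ : ℤ) - q₁ := by omega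
      rw [zpow_add, ← key]
      rw [← zpow_natCast (BSa m) (p₂ - q₁), hc]
      push_cast
      group
      simp only [hc]
      ring_nf

lemma BSnf_top (m : ℕ) (g : BS m) : ∃ p q : ℕ, ∃ j : ℤ,
    g = (BSa m)^(-(p:ℤ)) * (BSb m)^j * (BSa m)^((q:ℤ)) := by
  refine PresentedGroup.generated_by _ (BSnf m) (fun j => ?_) g
  cases j
  · exact ⟨0, 0, 1, by show BSb m = _; simp⟩
  · exact ⟨0, 1, 0, by show BSa m = _; simp⟩

/-! ### Main theorem -/

theorem stmt_0 (m : ℕ) (hm : 2 ≤ m) (g : BS m) (hg : g ∉ Subgroup.zpowers (BSa m)) :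
    (Subgroup.zpowers (BSa m)).map (MulAut.conj g).toMonoidHom ⊓
      Subgroup.zpowers (BSa m) = ⊥ := by
  have hm0 : (m:ℚ) ≠ 0 := Nat.cast_ne_zero.2 (by omega)
  rw [eq_bot_iff]
  intro x hx
  rw [Subgroup.mem_inf] at hx
  obtain ⟨hx1, hx2⟩ := hx
  obtain ⟨y, hy, rfl⟩ := Subgroup.mem_map.mp hx1
  obtain ⟨n, rfl⟩ := Subgroup.mem_zpowers_iff.mp hy
  obtain ⟨k, hk⟩ := Subgroup.mem_zpowers_iff.mp hx2
  simp only [MulEquiv.toMonoidHom_eq_coe, MonoidHom.coe_coe, MulAut.conj_apply] at hk hx2 ⊢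
  -- Step 1: k = n via the abelianization
  have hkn : k = n := by
    have h0 := congrArg (BSnu m) hk
    simp only [map_zpow, map_mul, map_inv, BSnu_a] at h0
    rw [mul_comm, ← mul_assoc, inv_mul_cancel, one_mul] at h0
    have := congrArg Multiplicative.toAdd h0
    simpa using this
  -- Step 2: if n = 0 we are done; otherwise contradiction
  rcases eq_or_ne n 0 with rfl | hn
  · simp
  · exfalso
    subst hkn
    -- g commutes with a^k
    have c0 : Commute g ((BSa m)^k) := by
      rw [Commute, SemiconjBy, ← mul_inv_eq_iff_eq_mul]
      exact hk.symm
    set n' : ℕ := k.natAbs with hn'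
    have hn'pos : 1 ≤ n' := by omega
    have c1 : Commute g ((BSa m)^((n':ℕ):ℤ)) := by
      rcases Int.natAbs_eq k with he | he
      · rw [← he]; exact c0
      · rw [show ((n':ℕ):ℤ) = -k by omega, zpow_neg]; exact c0.inv_right
    obtain ⟨p, q, j, rfl⟩ := BSnf_top m g
    -- derive that a^n' commutes with b^j
    have c2 : Commute ((BSa m)^((n':ℕ):ℤ)) ((BSb m)^j) := by
      have ca : ∀ t : ℤ, Commute ((BSa m)^((n':ℕ):ℤ)) ((BSa m)^t) :=
        fun t => Commute.zpow_zpow (Commute.refl _) _ _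
      have c3 : Commute ((BSa m)^((n':ℕ):ℤ))
          ((BSa m)^((p:ℤ)) * ((BSa m)^(-(p:ℤ)) * (BSb m)^j * (BSa m)^((q:ℤ))) * (BSa m)^(-(q:ℤ))) :=
        ((ca _).mul_right c1.symm).mul_right (ca _)
      have he : (BSa m)^((p:ℤ)) * ((BSa m)^(-(p:ℤ)) * (BSb m)^j * (BSa m)^((q:ℤ))) * (BSa m)^(-(q:ℤ))
          = (BSb m)^j := by group
      rwa [he] at c3
    -- hence b^(j·m^n') = b^j
    have key := BS_conj_pow m n' j
    have T : (BSb m)^(j * (m:ℤ)^n') = (BSb m)^j := by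
      rw [← key, ← zpow_natCast (BSa m) n', c2.eq, mul_inv_cancel_right]
    have T2 : (BSb m)^(j * (m:ℤ)^n' - j) = 1 := by
      rw [zpow_sub, T, mul_inv_cancel]
    have hj0 : j * (m:ℤ)^n' - j = 0 := BSb_inf_order m hm0 _ T2
    have hM : 2 ≤ (m:ℤ)^n' := by
      calc (2:ℤ) = 2^1 := by norm_num
      _ ≤ 2^n' := by exact pow_le_pow_right₀ (by norm_num) hn'pos
      _ ≤ (m:ℤ)^n' := by exact pow_le_pow_left₀ (by norm_num) (by exact_mod_cast hm) n'
    have hj : j = 0 := by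
      have : j * ((m:ℤ)^n' - 1) = 0 := by ring_nf; linarith [hj0]
      rcases mul_eq_zero.mp this with h | h
      · exact h
      · omega
    subst hj
    exact hg ⟨(q:ℤ) - p, by show (BSa m)^((q:ℤ)-(p:ℤ)) = _; rw [zpow_sub]; group⟩
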